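/- NSLD is a metric on finite multisets of strings: in particular, the triangle inequality NSLD(X,Y) + NSLD(Y,Z) ≥ NSLD(X,Z) holds for all finite multisets of strings X, Y, Z. -/

import Mathlib

variable {α : Type*} [Fintype α] [DecidableEq α]

/-- Cost structure for Levenshtein distance (removed from Mathlib; restored with its old meaning). -/
structure Levenshtein.Cost (α β δ : Type*) where
  delete : α → δ
  insert : β → δ
  substitute : α → β → δ

/-- The default cost: every deletion, insertion and substitution of distinct letters costs 1. -/
def Levenshtein.defaultCost {α : Type*} [DecidableEq α] : Levenshtein.Cost α α ℕ where
  delete _ := 1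
  insert _ := 1
  substitute a b := if a = b then 0 else 1

/-- Levenshtein distance with a given cost (old Mathlib's `levenshtein`, by its recursion equations). -/
def levenshtein {α β δ : Type*} [AddZeroClass δ] [Min δ] (C : Levenshtein.Cost α β δ) :
    List α → List β → δ
  | [], [] => 0
  | [], y :: ys => C.insert y + levenshtein C [] ys
  | x :: xs, [] => C.delete x + levenshtein C xs []
  | x :: xs, y :: ys =>
    min (C.delete x + levenshtein C xs (y :: ys))
      (min (C.insert y + levenshtein C (x :: xs) ys) (C.substitute x y + levenshtein C xs ys))

/-- Levenshtein distance: the minimum number of single-character insertions,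
deletions, and substitutions transforming one string into another. -/
def LD (x y : List α) : ℕ := levenshtein Levenshtein.defaultCost x y

/-- Normalized Levenshtein distance. -/
noncomputable def NLD (x y : List α) : ℝ :=
  2 * LD x y / (x.length + y.length + LD x y)

/-- Aggregate length of the tokens of a tokenized string (multiset of strings). -/
def aggLen (X : Multiset (List α)) : ℕ := (X.map List.length).sum

/-- Pad a multiset of strings with empty strings up to size `k`. -/
def pad (X : Multiset (List α)) (k : ℕ) : Multiset (List α) :=
  X + Multiset.replicate (k - Multiset.card X) []

/-- Setwise Levenshtein distance: pad both multisets with empty strings to size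
`k = max(|X|,|Y|)`, then take the minimum over all bijections (i.e. over all
orderings of the two padded multisets as lists) of the sum of tokenwise
Levenshtein distances. -/
noncomputable def SLD (X Y : Multiset (List α)) : ℕ :=
  sInf { n | ∃ xs ys : List (List α),
    (↑xs : Multiset (List α)) = pad X (max (Multiset.card X) (Multiset.card Y)) ∧
    (↑ys : Multiset (List α)) = pad Y (max (Multiset.card X) (Multiset.card Y)) ∧
    n = (List.zipWith LD xs ys).sum }

/-- Normalized Setwise Levenshtein distance. -/
noncomputable def NSLD (X Y : Multiset (List α)) : ℝ :=
  2 * SLD X Y / (aggLen X + aggLen Y + SLD X Y)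

set_option linter.unusedSectionVars false

@[simp] lemma LD_nil_nil : LD ([] : List α) [] = 0 := by simp [LD, levenshtein]

@[simp] lemma LD_nil_left (y : List α) : LD [] y = y.length := by
  induction y with
  | nil => simp [LD, levenshtein]
  | cons a t ih => simp only [LD, levenshtein] at *; simp [Levenshtein.defaultCost] at *; omega

@[simp] lemma LD_nil_right (x : List α) : LD x [] = x.length := by
  induction x with
  | nil => simp [LD, levenshtein]
  | cons a t ih => simp only [LD, levenshtein] at *; simp [Levenshtein.defaultCost] at *; omega

lemma LD_cons_cons (a : α) (xs : List α) (b : α) (ys : List α) :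
    LD (a :: xs) (b :: ys) =
      min (1 + LD xs (b :: ys))
        (min (1 + LD (a :: xs) ys) ((if a = b then 0 else 1) + LD xs ys)) := by
  simp [LD, levenshtein, Levenshtein.defaultCost]

@[simp] lemma LD_self (x : List α) : LD x x = 0 := by
  induction x with
  | nil => simp
  | cons a t ih =>
    have h : LD (a :: t) (a :: t) ≤ (if a = a then 0 else 1) + LD t t := by
      rw [LD_cons_cons]; exact le_trans (min_le_right _ _) (min_le_right _ _)
    simpa [ih] using h

lemma LD_comm (x y : List α) : LD x y = LD y x := by
  induction x generalizing y with
  | nil => simp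
  | cons a xs ihx =>
    induction y with
    | nil => simp
    | cons b ys ihy =>
      rw [LD_cons_cons, LD_cons_cons, ihx (b :: ys), ihx ys, ← ihy]
      have : (if a = b then 0 else 1) = (if b = a then 0 else 1) := by
        simp [eq_comm]
      rw [this]
      rw [min_comm (1 + LD (b :: ys) xs) _]
      ac_rfl

lemma length_le_LD_add : ∀ (x y : List α), y.length ≤ LD x y + x.length
  | [], y => by simp
  | a :: xs, [] => by simp
  | a :: xs, b :: ys => by
    have h1 := length_le_LD_add xs (b :: ys)
    have h2 := length_le_LD_add (a :: xs) ys
    have h3 := length_le_LD_add xs ys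
    rw [LD_cons_cons]
    rcases eq_or_ne a b with h | h <;> simp [h] at * <;> omega
termination_by x y => x.length + y.length

lemma LD_le_lengths : ∀ (x y : List α), LD x y ≤ x.length + y.length
  | [], y => by simp
  | a :: xs, y => by
    have h1 := LD_le_lengths xs y
    cases y with
    | nil => simp
    | cons b ys =>
      have : LD (a :: xs) (b :: ys) ≤ 1 + LD xs (b :: ys) := by
        rw [LD_cons_cons]; exact min_le_left _ _
      simp at *; omega
termination_by x y => x.length

theorem LD_triangle : ∀ (x y z : List α), LD x z ≤ LD x y + LD y z
  | x, [], z => by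
    have := LD_le_lengths x z; simp; omega
  | [], b :: ys, z => by
    have := length_le_LD_add (b :: ys) z; simp at *; omega
  | a :: xs, b :: ys, [] => by
    have := length_le_LD_add (b :: ys) (a :: xs)
    rw [LD_comm (b :: ys)] at this
    simp at *; omega
  | a :: xs, b :: ys, c :: zs => by
    have t1 := LD_triangle xs (b :: ys) (c :: zs)
    have t2 := LD_triangle (a :: xs) (b :: ys) zs
    have t4 := LD_triangle (a :: xs) ys (c :: zs)
    have t5 := LD_triangle (a :: xs) ys zs
    have t6 := LD_triangle xs ys (c :: zs)
    have t7 := LD_triangle xs ys zs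
    have u1 : LD (a :: xs) (c :: zs) ≤ 1 + LD xs (c :: zs) := by
      rw [LD_cons_cons]; exact min_le_left _ _
    have u2 : LD (a :: xs) (c :: zs) ≤ 1 + LD (a :: xs) zs := by
      rw [LD_cons_cons]; exact le_trans (min_le_right _ _) (min_le_left _ _)
    have u3 : LD (a :: xs) (c :: zs) ≤ (if a = c then 0 else 1) + LD xs zs := by
      rw [LD_cons_cons]; exact le_trans (min_le_right _ _) (min_le_right _ _)
    have e1 := LD_cons_cons a xs b ys
    have e2 := LD_cons_cons b ys c zs
    have hs : (if a = c then 0 else 1) ≤ (if a = b then 0 else 1) + (if b = c then 0 else 1) := by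
      rcases eq_or_ne a b with h | h <;> rcases eq_or_ne b c with h' | h' <;>
        simp [h, h'] <;> split <;> omega
    set sab := if a = b then 0 else 1 with hsab
    set sbc := if b = c then 0 else 1 with hsbc
    set sac := if a = c then 0 else 1 with hsac
    omega
termination_by x y z => x.length + y.length + z.length
decreasing_by all_goals simp <;> omega

/-- cost of a multiset of pairs -/
def pcost (P : Multiset (List α × List α)) : ℕ := (P.map fun p => LD p.1 p.2).sum

@[simp] lemma pcost_zero : pcost (0 : Multiset (List α × List α)) = 0 := rfl

@[simp] lemma pcost_cons (p : List α × List α) (P : Multiset (List α × List α)) :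
    pcost (p ::ₘ P) = LD p.1 p.2 + pcost P := by simp [pcost]

def SLDset (k : ℕ) (X Y : Multiset (List α)) : Set ℕ :=
  { n | ∃ P : Multiset (List α × List α),
      P.map Prod.fst = pad X k ∧ P.map Prod.snd = pad Y k ∧ n = pcost P }

@[simp] lemma card_pad {X : Multiset (List α)} {k : ℕ} (h : Multiset.card X ≤ k) :
    Multiset.card (pad X k) = k := by simp [pad]; omega

@[simp] lemma aggLen_pad (X : Multiset (List α)) (k : ℕ) : aggLen (pad X k) = aggLen X := by
  simp [pad, aggLen]

lemma pad_succ {X : Multiset (List α)} {k : ℕ} (h : Multiset.card X ≤ k) :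
    pad X (k + 1) = [] ::ₘ pad X k := by
  have : k + 1 - Multiset.card X = (k - Multiset.card X) + 1 := by omega
  simp only [pad, this, Multiset.replicate_succ]
  rw [Multiset.add_cons]

lemma zipWith_sum_eq_pcost : ∀ (xs ys : List (List α)), xs.length = ys.length →
    (List.zipWith LD xs ys).sum = pcost (↑(xs.zip ys) : Multiset (List α × List α))
  | [], [], _ => rfl
  | x :: xs, y :: ys, h => by
    simp only [List.zipWith_cons_cons, List.sum_cons, List.zip_cons_cons, ← Multiset.cons_coe,
      pcost_cons]
    rw [zipWith_sum_eq_pcost xs ys (by simpa using h)]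
  | [], _ :: _, h => by simp at h
  | _ :: _, [], h => by simp at h

lemma zipWith_map_fst_snd : ∀ (l : List (List α × List α)),
    List.zipWith LD (l.map Prod.fst) (l.map Prod.snd) = l.map (fun p => LD p.1 p.2)
  | [] => rfl
  | p :: l => by simp [zipWith_map_fst_snd l]

lemma SLD_eq_sInf_SLDset (X Y : Multiset (List α)) :
    SLD X Y = sInf (SLDset (max (Multiset.card X) (Multiset.card Y)) X Y) := by
  set k := max (Multiset.card X) (Multiset.card Y) with hk
  have hXk : Multiset.card X ≤ k := le_max_left _ _
  have hYk : Multiset.card Y ≤ k := le_max_right _ _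
  unfold SLD
  congr 1
  ext n
  constructor
  · rintro ⟨xs, ys, hx, hy, rfl⟩
    have hxl : xs.length = k := by
      have := congrArg Multiset.card hx
      simpa [card_pad hXk] using this
    have hyl : ys.length = k := by
      have := congrArg Multiset.card hy
      simpa [card_pad hYk] using this
    refine ⟨↑(xs.zip ys), ?_, ?_, ?_⟩
    · rw [Multiset.map_coe, List.map_fst_zip (by omega), hx]
    · rw [Multiset.map_coe, List.map_snd_zip (by omega), hy]
    · exact zipWith_sum_eq_pcost xs ys (by omega)
  · rintro ⟨P, hf, hs, rfl⟩
    refine ⟨P.toList.map Prod.fst, P.toList.map Prod.snd, ?_, ?_, ?_⟩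
    · rw [← Multiset.map_coe, Multiset.coe_toList, hf]
    · rw [← Multiset.map_coe, Multiset.coe_toList, hs]
    · have hp : pcost P = (P.toList.map (fun p => LD p.1 p.2)).sum := by
        rw [pcost]
        conv_lhs => rw [← Multiset.coe_toList P]
        rw [Multiset.map_coe, Multiset.sum_coe]
      rw [zipWith_map_fst_snd, hp]

lemma SLDset_nonempty {X Y : Multiset (List α)} {k : ℕ}
    (hX : Multiset.card X ≤ k) (hY : Multiset.card Y ≤ k) : (SLDset k X Y).Nonempty := by
  refine ⟨_, ↑((pad X k).toList.zip ((pad Y k).toList)), ?_, ?_, rfl⟩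
  · rw [Multiset.map_coe, List.map_fst_zip, Multiset.coe_toList]
    simp [card_pad hX, card_pad hY]
  · rw [Multiset.map_coe, List.map_snd_zip, Multiset.coe_toList]
    simp [card_pad hX, card_pad hY]

lemma pcost_le (P : Multiset (List α × List α)) :
    pcost P ≤ aggLen (P.map Prod.fst) + aggLen (P.map Prod.snd) := by
  induction P using Multiset.induction_on with
  | empty => simp [aggLen]
  | cons p P ih =>
    have := LD_le_lengths p.1 p.2
    simp only [aggLen, Multiset.map_cons, Multiset.sum_cons, pcost_cons, Multiset.map_map,
      Function.comp] at ih ⊢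
    omega

lemma le_pcost (P : Multiset (List α × List α)) :
    aggLen (P.map Prod.snd) ≤ pcost P + aggLen (P.map Prod.fst) := by
  induction P using Multiset.induction_on with
  | empty => simp [aggLen]
  | cons p P ih =>
    have := length_le_LD_add p.1 p.2
    simp only [aggLen, Multiset.map_cons, Multiset.sum_cons, pcost_cons, Multiset.map_map,
      Function.comp] at ih ⊢
    omega

lemma SLD_self (X : Multiset (List α)) : SLD X X = 0 := by
  rw [SLD_eq_sInf_SLDset]
  refine Nat.le_antisymm (Nat.sInf_le ?_) (Nat.zero_le _)
  refine ⟨(pad X (max (Multiset.card X) (Multiset.card X))).map (fun t => (t, t)), ?_, ?_, ?_⟩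
  · rw [Multiset.map_map]; simp
  · rw [Multiset.map_map]; simp
  · simp [pcost, Multiset.map_map]

lemma SLDset_swap {k : ℕ} {X Y : Multiset (List α)} {n : ℕ} (h : n ∈ SLDset k X Y) :
    n ∈ SLDset k Y X := by
  obtain ⟨P, hf, hs, rfl⟩ := h
  refine ⟨P.map Prod.swap, ?_, ?_, ?_⟩
  · rw [Multiset.map_map]; exact hs
  · rw [Multiset.map_map]; exact hf
  · simp only [pcost, Multiset.map_map, Function.comp]
    congr 1
    exact Multiset.map_congr rfl (fun p _ => LD_comm _ _)

lemma SLD_comm (X Y : Multiset (List α)) : SLD X Y = SLD Y X := by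
  rw [SLD_eq_sInf_SLDset, SLD_eq_sInf_SLDset, max_comm]
  congr 1
  ext n
  exact ⟨SLDset_swap, SLDset_swap⟩

lemma SLD_le_aggLen (X Y : Multiset (List α)) : SLD X Y ≤ aggLen X + aggLen Y := by
  rw [SLD_eq_sInf_SLDset]
  obtain ⟨P, hf, hs, hn⟩ := Nat.sInf_mem (SLDset_nonempty (X := X) (Y := Y)
    (k := max (Multiset.card X) (Multiset.card Y)) (le_max_left _ _) (le_max_right _ _))
  rw [hn]
  have := pcost_le P
  rwa [hf, hs, aggLen_pad, aggLen_pad] at this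

lemma aggLen_le_SLD (X Y : Multiset (List α)) : aggLen Y ≤ SLD X Y + aggLen X := by
  rw [SLD_eq_sInf_SLDset]
  obtain ⟨P, hf, hs, hn⟩ := Nat.sInf_mem (SLDset_nonempty (X := X) (Y := Y)
    (k := max (Multiset.card X) (Multiset.card Y)) (le_max_left _ _) (le_max_right _ _))
  rw [hn]
  have := le_pcost P
  rwa [hf, hs, aggLen_pad, aggLen_pad] at this

/-- Composition of pair multisets with matching middles. -/
lemma compose : ∀ (P Q : Multiset (List α × List α)),
    P.map Prod.snd = Q.map Prod.fst →
    ∃ R : Multiset (List α × List α), R.map Prod.fst = P.map Prod.fst ∧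
      R.map Prod.snd = Q.map Prod.snd ∧ pcost R ≤ pcost P + pcost Q := by
  intro P
  induction P using Multiset.induction_on with
  | empty =>
    intro Q h
    have : Q = 0 := by
      rw [← Multiset.map_eq_zero (f := Prod.fst), ← h]; simp
    exact ⟨0, by simp, by simp [this], by simp⟩
  | cons p P ih =>
    intro Q h
    have hy : p.2 ∈ Q.map Prod.fst := by rw [← h]; simp
    obtain ⟨q, hqQ, hq1⟩ := Multiset.mem_map.mp hy
    have hQ : Q = q ::ₘ Q.erase q := (Multiset.cons_erase hqQ).symm
    have h' : P.map Prod.snd = (Q.erase q).map Prod.fst := by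
      have := h
      rw [hQ, Multiset.map_cons, Multiset.map_cons, hq1] at this
      exact (Multiset.cons_inj_right _).mp this
    obtain ⟨R, hRf, hRs, hRc⟩ := ih (Q.erase q) h'
    refine ⟨(p.1, q.2) ::ₘ R, ?_, ?_, ?_⟩
    · simp [hRf]
    · rw [hQ]; simp [hRs]
    · have ht : LD p.1 q.2 ≤ LD p.1 p.2 + LD q.1 q.2 := by
        rw [← hq1] at *; exact LD_triangle _ _ _
      rw [hQ]
      simp only [pcost_cons]
      omega

lemma sInf_SLDset_succ_le {X Y : Multiset (List α)} {k : ℕ}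
    (hX : Multiset.card X ≤ k) (hY : Multiset.card Y ≤ k) :
    sInf (SLDset (k + 1) X Y) ≤ sInf (SLDset k X Y) := by
  obtain ⟨P, hf, hs, hn⟩ := Nat.sInf_mem (SLDset_nonempty hX hY)
  rw [hn]
  apply Nat.sInf_le
  exact ⟨(([] : List α), ([] : List α)) ::ₘ P,
    by simp [pad_succ hX, hf], by simp [pad_succ hY, hs], by simp⟩

lemma sInf_SLDset_le_succ {X Y : Multiset (List α)} {k : ℕ}
    (hX : Multiset.card X ≤ k) (hY : Multiset.card Y ≤ k) :
    sInf (SLDset k X Y) ≤ sInf (SLDset (k + 1) X Y) := by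
  obtain ⟨P, hf, hs, hn⟩ := Nat.sInf_mem
    (SLDset_nonempty (k := k + 1) (le_trans hX (Nat.le_succ _)) (le_trans hY (Nat.le_succ _)))
  have h1 : ([] : List α) ∈ P.map Prod.fst := by
    rw [hf, pad_succ hX]; exact Multiset.mem_cons_self _ _
  obtain ⟨p, hpP, hp1⟩ := Multiset.mem_map.mp h1
  have h2 : ([] : List α) ∈ P.map Prod.snd := by
    rw [hs, pad_succ hY]; exact Multiset.mem_cons_self _ _
  obtain ⟨q, hqP, hq2⟩ := Multiset.mem_map.mp h2
  rw [hn]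
  by_cases hpq : p = q
  · have hP : P = p ::ₘ P.erase p := (Multiset.cons_erase hpP).symm
    apply Nat.sInf_le
    refine ⟨P.erase p, ?_, ?_, ?_⟩
    · have := hf
      rw [hP, Multiset.map_cons, hp1, pad_succ hX] at this
      exact (Multiset.cons_inj_right _).mp this
    · have hp2 : p.2 = [] := by rw [hpq]; exact hq2
      have := hs
      rw [hP, Multiset.map_cons, hp2, pad_succ hY] at this
      exact (Multiset.cons_inj_right _).mp this
    · have : pcost P = LD p.1 p.2 + pcost (P.erase p) := by
        conv_lhs => rw [hP]
        simp
      rw [this, hp1, hpq, hq2]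
      simp
  · have hq' : q ∈ P.erase p := (Multiset.mem_erase_of_ne (fun h => hpq h.symm)).mpr hqP
    set P₂ := (P.erase p).erase q with hP₂
    have hP : P = p ::ₘ q ::ₘ P₂ := by
      rw [hP₂, Multiset.cons_erase hq', Multiset.cons_erase hpP]
    refine le_trans (Nat.sInf_le ⟨(q.1, p.2) ::ₘ P₂, ?_, ?_, rfl⟩) ?_
    · have := hf
      rw [hP, Multiset.map_cons, Multiset.map_cons, hp1, pad_succ hX] at this
      have := (Multiset.cons_inj_right _).mp this
      simpa using this
    · have := hs
      rw [hP, Multiset.map_cons, Multiset.map_cons, hq2, pad_succ hY,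
        Multiset.cons_swap] at this
      have := (Multiset.cons_inj_right _).mp this
      simpa using this
    · have hcost : pcost P = LD p.1 p.2 + LD q.1 q.2 + pcost P₂ := by
        conv_lhs => rw [hP]
        simp; omega
      have h3 : LD q.1 p.2 ≤ q.1.length + p.2.length := LD_le_lengths _ _
      have h4 : LD p.1 p.2 = p.2.length := by rw [hp1]; simp
      have h5 : LD q.1 q.2 = q.1.length := by rw [hq2]; simp
      have h6 : pcost ((q.1, p.2) ::ₘ P₂) = LD q.1 p.2 + pcost P₂ := by simp
      omega

lemma sInf_SLDset_stable {X Y : Multiset (List α)} {k K : ℕ}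
    (hX : Multiset.card X ≤ k) (hY : Multiset.card Y ≤ k) (hkK : k ≤ K) :
    sInf (SLDset K X Y) = sInf (SLDset k X Y) := by
  induction K, hkK using Nat.le_induction with
  | base => rfl
  | succ K hK ih =>
    have hXK : Multiset.card X ≤ K := le_trans hX hK
    have hYK : Multiset.card Y ≤ K := le_trans hY hK
    exact le_antisymm (le_trans (sInf_SLDset_succ_le hXK hYK) (le_of_eq ih))
      (le_trans (le_of_eq ih.symm) (sInf_SLDset_le_succ hXK hYK))

theorem SLD_triangle (X Y Z : Multiset (List α)) : SLD X Z ≤ SLD X Y + SLD Y Z := by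
  have hXK : Multiset.card X ≤ max (max (Multiset.card X) (Multiset.card Y)) (Multiset.card Z) :=
    le_trans (le_max_left _ _) (le_max_left _ _)
  have hYK : Multiset.card Y ≤ max (max (Multiset.card X) (Multiset.card Y)) (Multiset.card Z) :=
    le_trans (le_max_right _ _) (le_max_left _ _)
  have hZK : Multiset.card Z ≤ max (max (Multiset.card X) (Multiset.card Y)) (Multiset.card Z) :=
    le_max_right _ _
  set K := max (max (Multiset.card X) (Multiset.card Y)) (Multiset.card Z) with hK
  rw [SLD_eq_sInf_SLDset, SLD_eq_sInf_SLDset, SLD_eq_sInf_SLDset,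
    ← sInf_SLDset_stable (K := K) (le_max_left _ _) (le_max_right _ _) (max_le hXK hZK),
    ← sInf_SLDset_stable (K := K) (le_max_left _ _) (le_max_right _ _) (max_le hXK hYK),
    ← sInf_SLDset_stable (K := K) (le_max_left _ _) (le_max_right _ _) (max_le hYK hZK)]
  obtain ⟨P, hPf, hPs, hPn⟩ := Nat.sInf_mem (SLDset_nonempty (X := X) (Y := Y) hXK hYK)
  obtain ⟨Q, hQf, hQs, hQn⟩ := Nat.sInf_mem (SLDset_nonempty (X := Y) (Y := Z) hYK hZK)
  obtain ⟨R, hRf, hRs, hRc⟩ := compose P Q (by rw [hPs, hQf])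
  rw [hPn, hQn]
  calc sInf (SLDset K X Z) ≤ pcost R := Nat.sInf_le ⟨R, by rw [hRf, hPf], by rw [hRs, hQs], rfl⟩
    _ ≤ pcost P + pcost Q := hRc

lemma norm_tri_real (lx ly lz a b c : ℝ)
    (hlx : 0 ≤ lx) (hly : 0 ≤ ly) (hlz : 0 ≤ lz)
    (ha0 : 0 ≤ a) (hb0 : 0 ≤ b) (hc0 : 0 ≤ c)
    (htri : c ≤ a + b) (hau : a ≤ lx + ly) (hbu : b ≤ ly + lz)
    (hal : ly ≤ a + lx) (hbl : ly ≤ b + lz) :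
    2 * c / (lx + lz + c) ≤ 2 * a / (lx + ly + a) + 2 * b / (ly + lz + b) := by
  by_cases hC : lx + lz + c = 0
  · rw [hC]
    simp
    positivity
  have hC' : 0 < lx + lz + c := lt_of_le_of_ne (by linarith) (Ne.symm hC)
  by_cases hA : lx + ly + a = 0
  · have hx0 : lx = 0 := by linarith
    have hy0 : ly = 0 := by linarith
    have ha' : a = 0 := by linarith
    have hB' : 0 < ly + lz + b := by nlinarith
    rw [hA]
    simp only [div_zero, zero_add]
    rw [div_le_div_iff₀ hC' hB']
    nlinarith [mul_le_mul_of_nonneg_right (show c ≤ b by linarith) hlz]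
  have hA' : 0 < lx + ly + a := lt_of_le_of_ne (by linarith) (Ne.symm hA)
  by_cases hB : ly + lz + b = 0
  · have hz0 : lz = 0 := by linarith
    have hy0 : ly = 0 := by linarith
    have hb' : b = 0 := by linarith
    rw [hB]
    simp only [div_zero, add_zero]
    rw [div_le_div_iff₀ hC' hA']
    nlinarith [mul_le_mul_of_nonneg_right (show c ≤ a by linarith) hlx]
  have hB' : 0 < ly + lz + b := lt_of_le_of_ne (by linarith) (Ne.symm hB)
  rw [div_add_div _ _ (ne_of_gt hA') (ne_of_gt hB'), div_le_div_iff₀ hC' (by positivity)]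
  have h1 : 0 ≤ a * (ly + lz + b) * (lz - ly + b) := by
    apply mul_nonneg (mul_nonneg ha0 (le_of_lt hB'))
    linarith
  have h2 : 0 ≤ b * (lx + ly + a) * (lx - ly + a) := by
    apply mul_nonneg (mul_nonneg hb0 (le_of_lt hA'))
    linarith
  have h3 : 0 ≤ (a + b - c) * ((lx + ly) * (ly + lz) - a * b) := by
    apply mul_nonneg (by linarith)
    nlinarith [mul_le_mul hau hbu hb0 (by linarith : (0:ℝ) ≤ lx + ly)]
  nlinarith [h1, h2, h3]

theorem NSLD_isMetric (X Y Z : Multiset (List α)) :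
    NSLD X X = 0 ∧ NSLD X Y = NSLD Y X ∧
    NSLD X Z ≤ NSLD X Y + NSLD Y Z := by
  refine ⟨?_, ?_, ?_⟩
  · rw [NSLD, SLD_self]
    simp
  · rw [NSLD, NSLD, SLD_comm X Y, add_comm (aggLen X : ℝ) (aggLen Y : ℝ)]
  · have h1 : (SLD X Z : ℝ) ≤ SLD X Y + SLD Y Z := by exact_mod_cast SLD_triangle X Y Z
    have h2 : (SLD X Y : ℝ) ≤ aggLen X + aggLen Y := by exact_mod_cast SLD_le_aggLen X Y
    have h3 : (SLD Y Z : ℝ) ≤ aggLen Y + aggLen Z := by exact_mod_cast SLD_le_aggLen Y Z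
    have h4 : (aggLen Y : ℝ) ≤ SLD X Y + aggLen X := by exact_mod_cast aggLen_le_SLD X Y
    have h5 : (aggLen Y : ℝ) ≤ SLD Y Z + aggLen Z := by
      have := aggLen_le_SLD Z Y
      rw [SLD_comm Z Y] at this
      exact_mod_cast this
    exact norm_tri_real (aggLen X) (aggLen Y) (aggLen Z) (SLD X Y) (SLD Y Z) (SLD X Z)
      (Nat.cast_nonneg _) (Nat.cast_nonneg _) (Nat.cast_nonneg _)
      (Nat.cast_nonneg _) (Nat.cast_nonneg _) (Nat.cast_nonneg _)
      h1 h2 h3 h4 h5
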